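/- arXiv:math/0409400 — 2 statements merged into one kernel-verified Lean document; each statement's English description precedes it below -/
import Mathlib

section
/- Let S be a rational partial polyhedral decomposition, and T ⊂ S a nonempty subset satisfying condition (α) (closedness under cones having a member as a face). For cones τ_0, ..., τ_p ∈ T, the intersection (τ_0 ∩ ... ∩ τ_p) ∩ D is contractible if τ_0 ∩ ... ∩ τ_p ∈ T, and empty otherwise, where D = ∪_{τ∈T} τ°. -/
section Cones

variable {V : Type} [NormedAddCommGroup V] [NormedSpace ℝ V] [FiniteDimensional ℝ V]

/-- `τ` is a face of the convex cone `σ`. -/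
def IsFaceOf (τ σ : PointedCone ℝ V) : Prop :=
  (τ : Set V) ⊆ (σ : Set V) ∧
    ∀ x ∈ σ, ∀ y ∈ σ, x + y ∈ τ → x ∈ τ ∧ y ∈ τ

/-- A cone is polyhedral if it is generated by finitely many vectors. -/
def IsPolyhedralCone (σ : PointedCone ℝ V) : Prop :=
  ∃ s : Finset V, σ = Submodule.span _ (s : Set V)

/-- A cone is salient if it contains no nontrivial linear subspace. -/
def IsSalientCone (σ : PointedCone ℝ V) : Prop :=
  ∀ x ∈ σ, -x ∈ σ → x = 0

end Cones

open Set

set_option linter.unusedSectionVars false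
section Helpers

variable {V : Type} [NormedAddCommGroup V] [NormedSpace ℝ V] [FiniteDimensional ℝ V]

private lemma mem_intrinsicInterior_iff' {s : Set V} {x : V} :
    x ∈ intrinsicInterior ℝ s ↔ x ∈ affineSpan ℝ s ∧
      ∃ ε > 0, ∀ y ∈ affineSpan ℝ s, dist y x < ε → y ∈ s := by
  rw [mem_intrinsicInterior]
  constructor
  · rintro ⟨y, hy, rfl⟩
    refine ⟨y.2, ?_⟩
    rw [mem_interior_iff_mem_nhds, Metric.mem_nhds_iff] at hy
    obtain ⟨ε, hε, hball⟩ := hy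
    refine ⟨ε, hε, fun z hz hd => ?_⟩
    have hmem : (⟨z, hz⟩ : affineSpan ℝ s) ∈ Metric.ball y ε := by
      simpa [Metric.mem_ball, Subtype.dist_eq] using hd
    exact hball hmem
  · rintro ⟨hx, ε, hε, h⟩
    refine ⟨⟨x, hx⟩, ?_, rfl⟩
    rw [mem_interior_iff_mem_nhds, Metric.mem_nhds_iff]
    exact ⟨ε, hε, fun z hz => h z z.2 (by simpa [Subtype.dist_eq] using hz)⟩

private lemma combo_mem_intrinsicInterior {s : Set V} (hs : Convex ℝ s)
    {x y : V} (hx : x ∈ intrinsicInterior ℝ s) (hy : y ∈ s)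
    {a b : ℝ} (ha : 0 < a) (hb : 0 ≤ b) (hab : a + b = 1) :
    a • x + b • y ∈ intrinsicInterior ℝ s := by
  rw [mem_intrinsicInterior_iff'] at hx ⊢
  obtain ⟨hxs, ε, hε, hball⟩ := hx
  have hys : y ∈ affineSpan ℝ s := subset_affineSpan ℝ s hy
  set z := a • x + b • y with hzdef
  have hz : z ∈ affineSpan ℝ s := by
    have h1 := AffineSubspace.smul_vsub_vadd_mem (affineSpan ℝ s) b hys hxs hxs
    have h2 : z = b • (y -ᵥ x) +ᵥ x := by
      rw [hzdef, show a = 1 - b by linarith, vsub_eq_sub, vadd_eq_add]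
      module
    rwa [h2]
  refine ⟨hz, a * ε, by positivity, fun w hw hd => ?_⟩
  set x' := x + a⁻¹ • (w - z) with hx'def
  have hx'span : x' ∈ affineSpan ℝ s := by
    have h1 := AffineSubspace.smul_vsub_vadd_mem (affineSpan ℝ s) a⁻¹ hw hz hxs
    have h2 : x' = a⁻¹ • (w -ᵥ z) +ᵥ x := by
      rw [hx'def, vsub_eq_sub, vadd_eq_add]; module
    rwa [h2]
  have hx's : x' ∈ s := by
    apply hball x' hx'span
    rw [dist_eq_norm, hx'def, add_sub_cancel_left, norm_smul, Real.norm_eq_abs,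
      abs_of_pos (inv_pos.2 ha)]
    calc a⁻¹ * ‖w - z‖ < a⁻¹ * (a * ε) := by
          apply mul_lt_mul_of_pos_left _ (inv_pos.2 ha)
          rwa [← dist_eq_norm]
      _ = ε := by field_simp
  have h1 : a • (a⁻¹ • (w - z)) = w - z := by
    rw [smul_smul, mul_inv_cancel₀ ha.ne', one_smul]
  have hw_eq : a • x' + b • y = w := by
    rw [hx'def, smul_add, h1, hzdef]; abel
  have := hs hx's hy ha.le hb hab
  rwa [hw_eq] at this

private lemma exists_extension' {s : Set V} {x y : V}
    (hx : x ∈ intrinsicInterior ℝ s) (hy : y ∈ s) :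
    ∃ ε : ℝ, 0 < ε ∧ x + ε • (x - y) ∈ s := by
  rw [mem_intrinsicInterior_iff'] at hx
  obtain ⟨hxs, ε, hε, hball⟩ := hx
  rcases eq_or_ne x y with rfl | hxy
  · exact ⟨1, one_pos, by simpa using hball x hxs (by simpa using hε)⟩
  · have hn : 0 < ‖x - y‖ := by rw [norm_pos_iff, sub_ne_zero]; exact hxy
    set c := ε / (2 * ‖x - y‖) with hc
    refine ⟨c, by positivity, ?_⟩
    apply hball
    · have h1 := AffineSubspace.smul_vsub_vadd_mem (affineSpan ℝ s) c hxs
        (subset_affineSpan ℝ s hy) hxs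
      have h2 : x + c • (x - y) = c • (x -ᵥ y) +ᵥ x := by
        rw [vsub_eq_sub, vadd_eq_add]; module
      rwa [h2]
    · have hcn : c * ‖x - y‖ = ε / 2 := by
        rw [hc]; field_simp
      rw [dist_eq_norm, add_sub_cancel_left, norm_smul, Real.norm_eq_abs,
        abs_of_pos (by positivity : (0:ℝ) < c), hcn]
      linarith

private lemma pointedCone_convex (σ : PointedCone ℝ V) : Convex ℝ (σ : Set V) := by
  intro u hu v hv a b ha hb _
  exact add_mem (σ.smul_mem ha hu) (σ.smul_mem hb hv)

private lemma face_le_of_relint_mem {ρ μ : PointedCone ℝ V} (hface : IsFaceOf ρ μ)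
    {x : V} (hx : x ∈ intrinsicInterior ℝ (μ : Set V)) (hxρ : x ∈ ρ) :
    μ ≤ ρ := by
  intro y hy
  obtain ⟨ε, hε, hz⟩ := exists_extension' hx (SetLike.mem_coe.2 hy)
  have hεy : ε • y ∈ μ := μ.smul_mem hε.le hy
  have hsum : (x + ε • (x - y)) + ε • y = (1 + ε) • x := by module
  have hmem : (x + ε • (x - y)) + ε • y ∈ ρ := by
    rw [hsum]; exact ρ.smul_mem (by positivity : (0:ℝ) ≤ 1 + ε) hxρ
  have hρy : ε • y ∈ ρ := (hface.2 _ (SetLike.mem_coe.1 hz) (ε • y) hεy hmem).2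
  have hy_eq : y = ε⁻¹ • (ε • y) := by
    rw [smul_smul, inv_mul_cancel₀ hε.ne', one_smul]
  rw [hy_eq]
  exact ρ.smul_mem (by positivity : (0:ℝ) ≤ ε⁻¹) hρy

private lemma iInf_mem_S {S : Set (PointedCone ℝ V)}
    (hS : ∀ a ∈ S, ∀ b ∈ S, a ⊓ b ∈ S) :
    ∀ (n : ℕ) (f : Fin (n+1) → PointedCone ℝ V), (∀ i, f i ∈ S) → (⨅ i, f i) ∈ S := by
  intro n
  induction n with
  | zero =>
    intro f hf
    have h1 : ⨅ i, f i = f 0 :=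
      le_antisymm (iInf_le _ 0)
        (le_iInf fun i => Fin.cases le_rfl (fun j => j.elim0) i)
    rw [h1]; exact hf 0
  | succ n ih =>
    intro f hf
    have hsplit : ⨅ i, f i = f 0 ⊓ ⨅ i : Fin (n+1), f i.succ :=
      le_antisymm (le_inf (iInf_le _ 0) (le_iInf fun i => iInf_le _ i.succ))
        (le_iInf fun i => Fin.cases inf_le_left
          (fun j => inf_le_right.trans (iInf_le _ j)) i)
    rw [hsplit]
    exact hS _ (hf 0) _ (ih _ fun i => hf i.succ)

end Helpers


/-- Let `S` be a rational partial polyhedral decomposition (a collection of salient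
polyhedral cones, containing `{0}`, closed under faces, and such that the intersection of
any two of its cones belongs to `S` and is a common face), and let `T ⊆ S` be a nonempty
subset satisfying condition (α): any cone of `S` having a member of `T` as a face lies
in `T`.  For cones `τ_0, …, τ_p ∈ T`, the intersection `(τ_0 ∩ … ∩ τ_p) ∩ D` is
contractible if `τ_0 ∩ … ∩ τ_p ∈ T`, and empty otherwise, where `D = ⋃_{τ ∈ T} τ°`. -/
theorem intersection_with_D_contractible_or_empty
    {V : Type} [NormedAddCommGroup V] [NormedSpace ℝ V] [FiniteDimensional ℝ V]
    (S T : Set (PointedCone ℝ V))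
    (hpoly : ∀ σ ∈ S, IsPolyhedralCone σ) (hsal : ∀ σ ∈ S, IsSalientCone σ)
    (hzero : (⊥ : PointedCone ℝ V) ∈ S)
    (hfaces : ∀ σ ∈ S, ∀ τ : PointedCone ℝ V, IsFaceOf τ σ → τ ∈ S)
    (hinter : ∀ σ ∈ S, ∀ σ' ∈ S,
      σ ⊓ σ' ∈ S ∧ IsFaceOf (σ ⊓ σ') σ ∧ IsFaceOf (σ ⊓ σ') σ')
    (hTS : T ⊆ S) (hTne : T.Nonempty)
    (hα : ∀ τ ∈ T, ∀ σ ∈ S, IsFaceOf τ σ → σ ∈ T)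
    (p : ℕ) (τ : Fin (p + 1) → PointedCone ℝ V) (hτ : ∀ i, τ i ∈ T) :
    ((⨅ i, τ i) ∈ T →
      ContractibleSpace (((⨅ i, τ i : PointedCone ℝ V) : Set V) ∩
        (⋃ μ ∈ T, intrinsicInterior ℝ (μ : Set V)) : Set V)) ∧
    ((⨅ i, τ i) ∉ T →
      ((⨅ i, τ i : PointedCone ℝ V) : Set V) ∩
        (⋃ μ ∈ T, intrinsicInterior ℝ (μ : Set V)) = ∅) := by
  have hσS : (⨅ i, τ i) ∈ S :=
    iInf_mem_S (fun a ha b hb => (hinter a ha b hb).1) p τ (fun i => hTS (hτ i))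
  set σ := ⨅ i, τ i with hσdef
  have key : ∀ x, x ∈ (σ : Set V) ∩ (⋃ μ ∈ T, intrinsicInterior ℝ (μ : Set V)) →
      σ ∈ T := by
    rintro x ⟨hxσ, hxD⟩
    simp only [Set.mem_iUnion] at hxD
    obtain ⟨μ, hμT, hxμ⟩ := hxD
    obtain ⟨hμσS, hf1, hf2⟩ := hinter μ (hTS hμT) σ hσS
    have hxin : x ∈ μ ⊓ σ :=
      Submodule.mem_inf.2 ⟨SetLike.mem_coe.1 (intrinsicInterior_subset hxμ),
        SetLike.mem_coe.1 hxσ⟩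
    have hle : μ ≤ μ ⊓ σ := face_le_of_relint_mem hf1 hxμ hxin
    have heq : μ ⊓ σ = μ := le_antisymm inf_le_left hle
    exact hα μ hμT σ hσS (heq ▸ hf2)
  constructor
  · intro hσT
    obtain ⟨x₀, hx₀⟩ := Set.Nonempty.intrinsicInterior (pointedCone_convex σ)
      ⟨0, σ.zero_mem⟩
    have hx₀D : x₀ ∈ ⋃ μ ∈ T, intrinsicInterior ℝ (μ : Set V) :=
      Set.mem_iUnion₂.2 ⟨σ, hσT, hx₀⟩
    have hx₀σ : x₀ ∈ (σ : Set V) := intrinsicInterior_subset hx₀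
    have hstar : StarConvex ℝ x₀
        ((σ : Set V) ∩ ⋃ μ ∈ T, intrinsicInterior ℝ (μ : Set V)) := by
      intro y hy a b ha hb hab
      rcases ha.lt_or_eq with ha' | ha'
      · have hmem := combo_mem_intrinsicInterior (pointedCone_convex σ) hx₀ hy.1
          ha' hb hab
        exact ⟨intrinsicInterior_subset hmem, Set.mem_iUnion₂.2 ⟨σ, hσT, hmem⟩⟩
      · obtain rfl : a = 0 := ha'.symm
        obtain rfl : b = 1 := by linarith
        simpa using hy
    exact hstar.contractibleSpace ⟨x₀, hx₀σ, hx₀D⟩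
  · intro hσT
    rw [Set.eq_empty_iff_forall_notMem]
    intro x hx
    exact hσT (key x hx)
end

section
/- If a group H acts properly (in the sense of Definition 1bH(a)) on a scheme X separated and locally of finite type over k, and U_1, U_2 are open sub-schemes of X of finite type over k, then the set {γ ∈ H : U_1 ∩ γU_2 ≠ ∅} is finite. -/
open CategoryTheory AlgebraicGeometry

/-- The translate `γ • U` of an open subscheme by a group element acting on a scheme. -/
def schemeTranslate {X : Scheme} {H : Type} [Group H] (ρ : H →* Aut X) (γ : H)
    (U : X.Opens) : X.Opens :=
  (ρ γ⁻¹).hom ⁻¹ᵁ U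

/-- The action of `H` on `X` is proper: there is a Zariski covering by open affines `U`
such that `{γ ∈ H | U ∩ γU ≠ ∅}` is finite for each `U`. -/
def IsProperAction {X : Scheme} {H : Type} [Group H] (ρ : H →* Aut X) : Prop :=
  ∃ (ι : Type) (U : ι → X.Opens), (∀ α, IsAffineOpen (U α)) ∧ (⨆ α, U α) = ⊤ ∧
    ∀ α, {γ : H | U α ⊓ schemeTranslate ρ γ (U α) ≠ ⊥}.Finite

section TopAux

open TopologicalSpace Set

variable {α : Type*} [TopologicalSpace α]

/-- `z` is a maximal point of `S` (generic point of an irreducible component of `S`). -/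
def IsMaxPt (S : Set α) (z : α) : Prop :=
  z ∈ S ∧ ∀ y ∈ S, z ∈ closure {y} → y = z

lemma mem_open_of_closure_singleton {O : Set α} (hO : IsOpen O) {y g : α}
    (hy : y ∈ closure ({g} : Set α)) (hyO : y ∈ O) : g ∈ O := by
  obtain ⟨t, htO, htg⟩ := mem_closure_iff.mp hy O hO hyO
  rwa [Set.mem_singleton_iff.mp htg] at htO

lemma exists_isMaxPt [T0Space α] [QuasiSober α] {S O : Set α} (hS : IsOpen S)
    (hO : IsOpen O) (hOS : O ⊆ S) (hne : O.Nonempty) :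
    ∃ z ∈ O, IsMaxPt S z := by
  haveI : QuasiSober S := hS.isOpenEmbedding_subtypeVal.quasiSober
  obtain ⟨y, hy⟩ := hne
  set y' : S := ⟨y, hOS hy⟩ with hy'def
  have hC : IsIrreducible (irreducibleComponent y') := isIrreducible_irreducibleComponent
  have hgen : IsGenericPoint hC.genericPoint (irreducibleComponent y') :=
    hC.isGenericPoint_genericPoint isClosed_irreducibleComponent
  have hy'g : y' ∈ closure ({hC.genericPoint} : Set S) := by
    rw [hgen.def]; exact mem_irreducibleComponent
  have hO' : IsOpen (Subtype.val ⁻¹' O : Set S) := hO.preimage continuous_subtype_val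
  have hgO : (hC.genericPoint : α) ∈ O :=
    mem_open_of_closure_singleton hO' hy'g (show y' ∈ Subtype.val ⁻¹' O from hy)
  refine ⟨hC.genericPoint, hgO, hC.genericPoint.2, ?_⟩
  intro y₀ hy₀ hcl
  set y₀' : S := ⟨y₀, hy₀⟩ with hy₀'def
  have hgcl : hC.genericPoint ∈ closure ({y₀'} : Set S) := by
    rw [closure_subtype]
    simpa using hcl
  have h1 : closure ({hC.genericPoint} : Set S) ⊆ closure ({y₀'} : Set S) :=
    closure_minimal (Set.singleton_subset_iff.mpr hgcl) isClosed_closure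
  have h2 : irreducibleComponent y' ⊆ closure ({y₀'} : Set S) := by
    rw [← hgen.def]; exact h1
  have h3 : closure ({y₀'} : Set S) = irreducibleComponent y' :=
    eq_irreducibleComponent (isIrreducible_singleton.closure).2 h2
  have hgen₀ : IsGenericPoint y₀' (irreducibleComponent y') := by
    rw [← h3]; exact isGenericPoint_closure
  have : y₀' = hC.genericPoint := hgen₀.eq hgen
  exact congrArg Subtype.val this

lemma finite_isMaxPt [T0Space α] [QuasiSober α] {S : Set α} (hS : IsOpen S)
    (hN : NoetherianSpace S) : {z : α | IsMaxPt S z}.Finite := by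
  classical
  haveI : QuasiSober S := hS.isOpenEmbedding_subtypeVal.quasiSober
  haveI := hN
  have key : ∀ z (hz : IsMaxPt S z),
      IsGenericPoint (⟨z, hz.1⟩ : S) (irreducibleComponent (⟨z, hz.1⟩ : S)) := by
    intro z hz
    set z' : S := ⟨z, hz.1⟩ with hz'def
    have hC : IsIrreducible (irreducibleComponent z') := isIrreducible_irreducibleComponent
    have hgen : IsGenericPoint hC.genericPoint (irreducibleComponent z') :=
      hC.isGenericPoint_genericPoint isClosed_irreducibleComponent
    have hz'g : z' ∈ closure ({hC.genericPoint} : Set S) := by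
      rw [hgen.def]; exact mem_irreducibleComponent
    have hcl : z ∈ closure ({(hC.genericPoint : α)} : Set α) := by
      have := closure_subtype.mp hz'g
      simpa using this
    have heq : (hC.genericPoint : α) = z := hz.2 _ hC.genericPoint.2 hcl
    have : hC.genericPoint = z' := Subtype.ext heq
    rwa [this] at hgen
  set f : α → Set S := fun z =>
    if h : z ∈ S then irreducibleComponent (⟨z, h⟩ : S) else ∅ with hfdef
  have hfim : f '' {z : α | IsMaxPt S z} ⊆ irreducibleComponents S := by
    rintro _ ⟨z, hz, rfl⟩
    simp only [hfdef, dif_pos hz.1]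
    exact irreducibleComponent_mem_irreducibleComponents _
  apply Set.Finite.of_finite_image
    (NoetherianSpace.finite_irreducibleComponents.subset hfim)
  intro z₁ hz₁ z₂ hz₂ hf
  simp only [hfdef, dif_pos hz₁.1, dif_pos hz₂.1] at hf
  have h₁ := key z₁ hz₁
  have h₂ := key z₂ hz₂
  rw [hf] at h₁
  exact congrArg Subtype.val (h₁.eq h₂)

lemma IsMaxPt.homeomorph {V : Set α} (hV : IsOpen V) {z : α} (hz : IsMaxPt V z)
    (e : α ≃ₜ α) {W : Set α} (hzW : e.symm z ∈ W) : IsMaxPt W (e.symm z) := by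
  refine ⟨hzW, fun y _ hcl => ?_⟩
  have h1 : z ∈ closure ({e y} : Set α) := by
    have : e (e.symm z) ∈ e '' closure {y} := Set.mem_image_of_mem _ hcl
    rwa [e.image_closure, Set.image_singleton, e.apply_symm_apply] at this
  have h2 : e y ∈ V := mem_open_of_closure_singleton hV h1 hz.1
  have h3 : e y = z := hz.2 _ h2 h1
  rw [← h3, e.symm_apply_apply]

lemma core_finite {α H : Type*} [TopologicalSpace α] [T0Space α] [QuasiSober α] [Group H]
    (σ : H → α ≃ₜ α) (hσ1 : ∀ x : α, σ 1 x = x)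
    (hσm : ∀ (γ δ : H) (x : α), σ (γ * δ) x = σ γ (σ δ x))
    {V W : Set α} (hV : IsOpen V) (hW : IsOpen W)
    (hNV : NoetherianSpace V) (hNW : NoetherianSpace W)
    (hfin : {γ : H | ∃ x ∈ W, σ γ⁻¹ x ∈ W}.Finite) :
    {γ : H | ∃ x ∈ V, σ γ⁻¹ x ∈ W}.Finite := by
  classical
  have hsymm : ∀ (γ : H) (x : α), (σ γ).symm x = σ γ⁻¹ x := by
    intro γ x
    apply (σ γ).injective
    rw [Homeomorph.apply_symm_apply, ← hσm, mul_inv_cancel, hσ1]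
  have hkey : ∀ (z w : α), w ∈ W → {γ : H | σ γ⁻¹ z = w}.Finite := by
    intro z w hwW
    rcases Set.eq_empty_or_nonempty {γ : H | σ γ⁻¹ z = w} with h | ⟨γ₀, hγ₀⟩
    · simp [h]
    · apply Set.Finite.subset ((hfin.image (fun δ => γ₀ * δ⁻¹)))
      intro γ hγ
      refine ⟨γ⁻¹ * γ₀, ⟨w, hwW, ?_⟩, by group⟩
      have hγw : σ γ w = z := by
        rw [← hγ, ← hσm, mul_inv_cancel, hσ1]
      have hγ₀w : σ γ₀⁻¹ z = w := hγ₀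
      rw [mul_inv_rev, inv_inv, hσm, hγw, hγ₀w]
      exact hwW
  have hMV := finite_isMaxPt hV hNV
  have hMW := finite_isMaxPt hW hNW
  apply Set.Finite.subset
    (Set.Finite.biUnion hMV fun z _ => Set.Finite.biUnion hMW fun w hw => hkey z w hw.1)
  rintro γ ⟨x, hxV, hxW⟩
  have hOopen : IsOpen (V ∩ (σ γ⁻¹) ⁻¹' W) := hV.inter (hW.preimage (σ γ⁻¹).continuous)
  obtain ⟨z, hzO, hz⟩ := exists_isMaxPt hV hOopen Set.inter_subset_left ⟨x, hxV, hxW⟩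
  have hzW : (σ γ).symm z ∈ W := by rw [hsymm]; exact hzO.2
  have hw : IsMaxPt W (σ γ⁻¹ z) := by
    rw [← hsymm]; exact hz.homeomorph hV (σ γ) hzW
  exact Set.mem_biUnion hz (Set.mem_biUnion hw rfl)

end TopAux

/-- If a group `H` acts faithfully and properly on a scheme `X` which is separated and
locally of finite type over a field `k`, and `U₁`, `U₂` are open subschemes of `X` of
finite type over `k` (equivalently, quasi-compact), then `{γ ∈ H : U₁ ∩ γU₂ ≠ ∅}`
is finite. -/
theorem finite_translates_meeting_of_properAction
    (k : Type) [Field k] (X : Scheme) (sX : X ⟶ Spec (CommRingCat.of k))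
    [IsSeparated sX] [LocallyOfFiniteType sX]
    (H : Type) [Group H] (ρ : H →* Aut X)
    (hfaithful : Function.Injective ρ)
    (hproper : IsProperAction ρ)
    (U₁ U₂ : X.Opens) (h₁ : IsCompact (U₁ : Set X)) (h₂ : IsCompact (U₂ : Set X)) :
    {γ : H | U₁ ⊓ schemeTranslate ρ γ U₂ ≠ ⊥}.Finite := by
  classical
  obtain ⟨ι, U, haff, hcov, hfin⟩ := hproper
  -- `X` is locally Noetherian.
  haveI hln : IsLocallyNoetherian X := by
    constructor
    intro V
    have hft := LocallyOfFiniteType.finiteType_of_affine_subset sX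
      (isAffineOpen_top _) V.2 (fun x _ => trivial)
    haveI : IsNoetherianRing (CommRingCat.of k) := inferInstanceAs (IsNoetherianRing k)
    haveI : IsNoetherianRing Γ(Spec (CommRingCat.of k), ⊤) :=
      isNoetherianRing_of_ringEquiv (CommRingCat.of k)
        (Scheme.ΓSpecIso (CommRingCat.of k)).symm.commRingCatIsoToRingEquiv
    letI := (sX.appLE ⊤ V.1 (fun x _ => trivial)).hom.toAlgebra
    haveI : Algebra.FiniteType Γ(Spec (CommRingCat.of k), ⊤) Γ(X, V.1) := hft
    exact Algebra.FiniteType.isNoetherianRing Γ(Spec (CommRingCat.of k), ⊤) Γ(X, V.1)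
  have hNS : ∀ α : ι, TopologicalSpace.NoetherianSpace ((U α : Set X)) := by
    intro α
    haveI : IsNoetherianRing Γ(X, U α) :=
      IsLocallyNoetherian.component_noetherian ⟨U α, haff α⟩
    exact noetherianSpace_of_isAffineOpen (U α) (haff α)
  -- The action by homeomorphisms.
  set σ : H → (X ≃ₜ X) := fun γ => TopCat.homeoOfIso (Scheme.forgetToTop.mapIso (ρ γ))
    with hσdef
  have hσ1 : ∀ x : X, σ 1 x = x := by
    intro x
    show ((ρ 1).hom.base x) = x
    rw [map_one ρ]
    rfl
  have hσm : ∀ (γ δ : H) (x : X), σ (γ * δ) x = σ γ (σ δ x) := by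
    intro γ δ x
    show ((ρ (γ * δ)).hom.base x) = (ρ γ).hom.base ((ρ δ).hom.base x)
    rw [map_mul ρ, Aut.Aut_mul_def]
    simp
    rfl
  -- Membership translation.
  have hmem : ∀ (γ : H) (V W : X.Opens),
      (V ⊓ schemeTranslate ρ γ W ≠ ⊥) ↔ ∃ x ∈ (V : Set X), σ γ⁻¹ x ∈ (W : Set X) := by
    intro γ V W
    rw [TopologicalSpace.Opens.ne_bot_iff_nonempty]
    constructor
    · rintro ⟨x, hx⟩
      exact ⟨x, hx.1, hx.2⟩
    · rintro ⟨x, hx1, hx2⟩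
      exact ⟨x, hx1, hx2⟩
  -- Finite subcovers of U₁ and U₂.
  have hcovset : ∀ x : X, ∃ α, x ∈ U α := by
    intro x
    have : x ∈ (⨆ α, U α) := by rw [hcov]; trivial
    simpa [TopologicalSpace.Opens.mem_iSup] using this
  obtain ⟨A, hA⟩ := h₁.elim_finite_subcover (fun α => (U α : Set X))
    (fun α => (U α).isOpen) (fun x _ => Set.mem_iUnion.mpr (hcovset x))
  obtain ⟨B, hB⟩ := h₂.elim_finite_subcover (fun α => (U α : Set X))
    (fun α => (U α).isOpen) (fun x _ => Set.mem_iUnion.mpr (hcovset x))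
  -- Put everything together.
  have hsub : {γ : H | U₁ ⊓ schemeTranslate ρ γ U₂ ≠ ⊥} ⊆
      ⋃ α ∈ (A : Set ι), ⋃ β ∈ (B : Set ι),
        {γ : H | ∃ x ∈ (U α : Set X), σ γ⁻¹ x ∈ (U β : Set X)} := by
    intro γ hγ
    obtain ⟨x, hx1, hx2⟩ := (hmem γ U₁ U₂).mp hγ
    obtain ⟨α, hαA, hxα⟩ := by
      simpa using Set.mem_iUnion₂.mp (hA hx1)
    obtain ⟨β, hβB, hxβ⟩ := by
      simpa using Set.mem_iUnion₂.mp (hB hx2)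
    exact Set.mem_biUnion hαA (Set.mem_biUnion hβB ⟨x, hxα, hxβ⟩)
  apply Set.Finite.subset _ hsub
  apply Set.Finite.biUnion A.finite_toSet
  intro α _
  apply Set.Finite.biUnion B.finite_toSet
  intro β _
  apply core_finite σ hσ1 hσm (U α).isOpen (U β).isOpen (hNS α) (hNS β)
  have := hfin β
  apply Set.Finite.subset this
  intro γ hγ
  exact (hmem γ (U β) (U β)).mpr hγ
end
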